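/- (Meyer–Wallach measure of the time-evolved N-body state) Let N ≥ 2 and let ψ_t be the time-evolved N-body state. For each p ∈ {1,…,N} let ρ_p(t) be the 2×2 reduced density matrix of qubit p, with entries ρ_p(t)_{xy} = Σ_{j : {1,…,N}\{p} → {0,1}} ψ_t(x∪j)·conj(ψ_t(y∪j)). Then the Meyer–Wallach measure Q_1(t) = (1/N)·Σ_{p=1}^{N} 2·(1 − Σ_{x,y}|ρ_p(t)_{xy}|²) satisfies Q_1(t) = 1 − (1/N)·Σ_{p=1}^{N} Π_{b ≠ p} cos²(Φ_{pb}·t/2), where Φ_{pb} is the signed entangling phase of the pair (p,b) (with Φ_{pb} = Φ_{bp}). -/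

import Mathlib

open Real

/-- Extend an assignment of bit `x` to qubit `p` and bits `j` to the remaining
qubits into a full bit string. -/
def QGEM.mergeOne {N : ℕ} (p : Fin N) (x : Fin 2)
    (j : {i : Fin N // i ≠ p} → Fin 2) : Fin N → Fin 2 :=
  fun i => if h : i = p then x else j ⟨i, h⟩

namespace QGEMAux

lemma abs_two_exp_sq (a b : ℝ) :
    ‖Complex.exp (Complex.I * a) + Complex.exp (Complex.I * b)‖ ^ 2
      = 4 * Real.cos ((a - b) / 2) ^ 2 := by
  have h : Complex.exp (Complex.I * a) + Complex.exp (Complex.I * b)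
      = Complex.exp (Complex.I * (((a + b) / 2 : ℝ))) *
        (2 * Complex.cos (((a - b) / 2 : ℝ))) := by
    rw [Complex.two_cos, mul_add, ← Complex.exp_add, ← Complex.exp_add]
    congr 1 <;> push_cast <;> ring_nf
  rw [h, norm_mul, norm_mul, Complex.norm_exp, ← Complex.ofReal_cos, Complex.norm_real, Real.norm_eq_abs]
  simp [Complex.mul_re]
  rw [mul_pow, ← sq_abs (Real.cos _)]
  ring

/-- The per-neighbour phase difference function. -/
def g {N : ℕ} (φ : Fin N → Fin N → Fin 2 → Fin 2 → ℝ) (p b : Fin N)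
    (x y v : Fin 2) : ℝ :=
  (if p < b then φ p b x v - φ p b y v else 0) +
  (if b < p then φ b p v x - φ b p v y else 0)

lemma phase_diff {N : ℕ} (φ : Fin N → Fin N → Fin 2 → Fin 2 → ℝ)
    (p : Fin N) (x y : Fin 2) (j : {i : Fin N // i ≠ p} → Fin 2) :
    (∑ a, ∑ b, if a < b then φ a b (QGEM.mergeOne p x j a) (QGEM.mergeOne p x j b) else 0)
      - (∑ a, ∑ b, if a < b then φ a b (QGEM.mergeOne p y j a) (QGEM.mergeOne p y j b) else 0)
      = ∑ i : {i : Fin N // i ≠ p}, g φ p i x y (j i) := by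
  classical
  set Mx := QGEM.mergeOne p x j with hMx
  set My := QGEM.mergeOne p y j with hMy
  set d : Fin N → Fin N → ℝ := fun a b =>
    (if a < b then φ a b (Mx a) (Mx b) else 0) - (if a < b then φ a b (My a) (My b) else 0)
    with hd
  have hMxne : ∀ (i : Fin N) (h : i ≠ p), Mx i = j ⟨i, h⟩ := by
    intro i h; simp [hMx, QGEM.mergeOne, h]
  have hMyne : ∀ (i : Fin N) (h : i ≠ p), My i = j ⟨i, h⟩ := by
    intro i h; simp [hMy, QGEM.mergeOne, h]
  have hMxp : Mx p = x := by simp [hMx, QGEM.mergeOne]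
  have hMyp : My p = y := by simp [hMy, QGEM.mergeOne]
  have hsplit : ∀ a b : Fin N,
      d a b = (if a = p then d p b else 0) + (if b = p then d a p else 0) := by
    intro a b
    by_cases ha : a = p <;> by_cases hb : b = p
    · subst ha; subst hb; simp [hd]
    · subst ha; simp [hb]
    · subst hb; simp [ha]
    · simp only [ha, hb, if_false, add_zero]
      simp [hd, hMxne a ha, hMyne a ha, hMxne b hb, hMyne b hb]
  calc (∑ a, ∑ b, if a < b then φ a b (Mx a) (Mx b) else 0)
        - (∑ a, ∑ b, if a < b then φ a b (My a) (My b) else 0)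
      = ∑ a, ∑ b, d a b := by
        rw [← Finset.sum_sub_distrib]; exact Finset.sum_congr rfl fun a _ => by
          rw [← Finset.sum_sub_distrib]
    _ = ∑ a, ∑ b, ((if a = p then d p b else 0) + (if b = p then d a p else 0)) := by
        simp_rw [← hsplit]
    _ = (∑ b, d p b) + (∑ a, d a p) := by
        simp_rw [Finset.sum_add_distrib]
        congr 1
        · rw [Finset.sum_comm]
          simp
        · exact Finset.sum_congr rfl fun a _ => by simp
    _ = ∑ b : Fin N, (d p b + d b p) := by rw [← Finset.sum_add_distrib]
    _ = ∑ b ∈ Finset.univ.erase p, (d p b + d b p) := by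
        rw [Finset.sum_erase]
        simp [hd]
    _ = ∑ i : {i : Fin N // i ≠ p}, (d (p : Fin N) i + d i p) := by
        exact Finset.sum_subtype _ (by simp) _
    _ = ∑ i : {i : Fin N // i ≠ p}, g φ p i x y (j i) := by
        refine Finset.sum_congr rfl fun i _ => ?_
        have hip : (i : Fin N) ≠ p := i.2
        simp only [hd, g]
        rw [hMxp, hMyp, hMxne i hip, hMyne i hip]
        rcases lt_trichotomy p (i : Fin N) with h | h | h
        · simp [h, asymm h]
        · exact absurd h.symm hip
        · simp [h, asymm h]

lemma rho_eq {N : ℕ} (φ : Fin N → Fin N → Fin 2 → Fin 2 → ℝ) (t : ℝ)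
    (phiJ : (Fin N → Fin 2) → ℝ)
    (hphiJ : ∀ J, phiJ J = ∑ p, ∑ q, if p < q then φ p q (J p) (J q) else 0)
    (ψ : (Fin N → Fin 2) → ℂ)
    (hψ : ∀ J, ψ J = Complex.ofReal (1 / Real.sqrt (2 ^ N)) *
      Complex.exp (Complex.I * Complex.ofReal (t * phiJ J)))
    (p : Fin N) (x y : Fin 2) :
    (∑ j : {i : Fin N // i ≠ p} → Fin 2,
      ψ (QGEM.mergeOne p x j) * (starRingEnd ℂ) (ψ (QGEM.mergeOne p y j)))
    = Complex.ofReal (1 / 2 ^ N) * ∏ i : {i : Fin N // i ≠ p},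
        (Complex.exp (Complex.I * Complex.ofReal (t * g φ p i x y 0))
          + Complex.exp (Complex.I * Complex.ofReal (t * g φ p i x y 1))) := by
  classical
  have hc : (1 / Real.sqrt (2 ^ N)) * (1 / Real.sqrt (2 ^ N)) = 1 / 2 ^ N := by
    rw [div_mul_div_comm, one_mul, Real.mul_self_sqrt (by positivity)]
  have hterm : ∀ j : {i : Fin N // i ≠ p} → Fin 2,
      ψ (QGEM.mergeOne p x j) * (starRingEnd ℂ) (ψ (QGEM.mergeOne p y j))
        = Complex.ofReal (1 / 2 ^ N) *
          ∏ i : {i : Fin N // i ≠ p},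
            Complex.exp (Complex.I * Complex.ofReal (t * g φ p i x y (j i))) := by
    intro j
    rw [hψ, hψ, map_mul, ← Complex.exp_conj]
    rw [map_mul, Complex.conj_I, Complex.conj_ofReal, Complex.conj_ofReal]
    rw [mul_mul_mul_comm, ← Complex.ofReal_mul, hc, ← Complex.exp_add]
    congr 1
    have : Complex.I * Complex.ofReal (t * phiJ (QGEM.mergeOne p x j)) +
        -Complex.I * Complex.ofReal (t * phiJ (QGEM.mergeOne p y j))
        = Complex.I * Complex.ofReal
            (t * (phiJ (QGEM.mergeOne p x j) - phiJ (QGEM.mergeOne p y j))) := by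
      push_cast; ring
    rw [this, hphiJ, hphiJ, phase_diff φ p x y j, Finset.mul_sum,
      Complex.ofReal_sum, Finset.mul_sum, Complex.exp_sum]
  rw [Finset.sum_congr rfl fun j _ => hterm j, ← Finset.mul_sum]
  congr 1
  rw [← Fintype.prod_sum fun (i : {i : Fin N // i ≠ p}) (v : Fin 2) =>
    Complex.exp (Complex.I * Complex.ofReal (t * g φ p i x y v))]
  simp [Fin.sum_univ_two]

lemma card_ne {N : ℕ} (p : Fin N) :
    Fintype.card {i : Fin N // i ≠ p} = N - 1 := by
  simp [Fintype.card_subtype_compl]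

lemma abs_rho_sq {N : ℕ} (hN : 1 ≤ N) {p : Fin N} (c : {i : Fin N // i ≠ p} → ℝ)
    (E : {i : Fin N // i ≠ p} → ℂ)
    (hE : ∀ i, ‖E i‖ ^ 2 = 4 * Real.cos (c i) ^ 2) :
    ‖(Complex.ofReal (1 / 2 ^ N)) * ∏ i, E i‖ ^ 2
      = (1 / 4) * ∏ i : {i : Fin N // i ≠ p}, Real.cos (c i) ^ 2 := by
  rw [norm_mul, mul_pow, Complex.norm_real, Real.norm_eq_abs, abs_of_nonneg (by positivity),
    norm_prod, ← Finset.prod_pow]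
  have h1 : ∏ i : {i : Fin N // i ≠ p}, ‖E i‖ ^ 2
      = 4 ^ (N - 1) * ∏ i : {i : Fin N // i ≠ p}, Real.cos (c i) ^ 2 := by
    rw [Finset.prod_congr rfl fun i _ => hE i, Finset.prod_mul_distrib,
      Finset.prod_const, Finset.card_univ, card_ne]
  rw [h1, ← mul_assoc]
  congr 1
  have h2 : ((2 : ℝ) ^ N) ^ 2 = 4 ^ N := by
    rw [← pow_mul, mul_comm, pow_mul]; norm_num
  rw [div_pow, one_pow, h2]
  rw [show N = (N - 1) + 1 by omega, pow_succ]
  have h4 : (0:ℝ) < 4 ^ (N - 1) := by positivity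
  field_simp
  simp

end QGEMAux

/-- (Meyer–Wallach measure) For the time-evolved N-body QGEM state, the
Meyer–Wallach measure `Q_1(t) = (1/N)·Σ_p 2(1 − Tr ρ_p(t)²)` equals
`1 − (1/N)·Σ_p Π_{b ≠ p} cos²(Φ_{pb}·t/2)`, where `Φ_{pb}` is the signed
entangling phase of the pair `(p,b)` (extended symmetrically). -/
theorem meyer_wallach_measure (N : ℕ) (hN : 2 ≤ N)
    (φ : Fin N → Fin N → Fin 2 → Fin 2 → ℝ) (t : ℝ)
    (Φ : Fin N → Fin N → ℝ)
    (hΦ : ∀ a b : Fin N, a < b →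
      Φ a b = φ a b 0 1 + φ a b 1 0 - φ a b 0 0 - φ a b 1 1)
    (hΦsym : ∀ a b : Fin N, Φ a b = Φ b a)
    (phiJ : (Fin N → Fin 2) → ℝ)
    (hphiJ : ∀ J, phiJ J = ∑ p, ∑ q, if p < q then φ p q (J p) (J q) else 0)
    (ψ : (Fin N → Fin 2) → ℂ)
    (hψ : ∀ J, ψ J = Complex.ofReal (1 / Real.sqrt (2 ^ N)) *
      Complex.exp (Complex.I * Complex.ofReal (t * phiJ J)))
    (ρ : Fin N → Fin 2 → Fin 2 → ℂ)
    (hρ : ∀ p x y, ρ p x y = ∑ j : {i : Fin N // i ≠ p} → Fin 2,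
      ψ (QGEM.mergeOne p x j) * (starRingEnd ℂ) (ψ (QGEM.mergeOne p y j))) :
    (1 / (N : ℝ)) * ∑ p : Fin N,
        2 * (1 - ∑ x : Fin 2, ∑ y : Fin 2, ‖ρ p x y‖ ^ 2) =
      1 - (1 / (N : ℝ)) * ∑ p : Fin N,
        ∏ b ∈ Finset.univ.erase p, Real.cos (Φ p b * t / 2) ^ 2 := by
  classical
  have hN1 : 1 ≤ N := by omega
  have habs : ∀ (p : Fin N) (x y : Fin 2), ‖ρ p x y‖ ^ 2
      = (1 / 4) * ∏ i : {i : Fin N // i ≠ p},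
          Real.cos (t * (QGEMAux.g φ p i x y 0 - QGEMAux.g φ p i x y 1) / 2) ^ 2 := by
    intro p x y
    rw [hρ, QGEMAux.rho_eq φ t phiJ hphiJ ψ hψ p x y]
    exact QGEMAux.abs_rho_sq hN1 _ _ (fun i => by rw [QGEMAux.abs_two_exp_sq]; ring_nf)
  have hgxx : ∀ (p b : Fin N) (x v : Fin 2), QGEMAux.g φ p b x x v = 0 := by
    intro p b x v; simp [QGEMAux.g]
  have hg01 : ∀ (p b : Fin N), b ≠ p →
      QGEMAux.g φ p b 0 1 0 - QGEMAux.g φ p b 0 1 1 = -Φ p b := by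
    intro p b hbp
    rcases lt_trichotomy p b with h | h | h
    · simp only [QGEMAux.g, if_pos h, if_neg (asymm h), add_zero]
      rw [hΦ p b h]; ring
    · exact absurd h.symm hbp
    · simp only [QGEMAux.g, if_pos h, if_neg (asymm h), zero_add]
      rw [hΦsym p b, hΦ b p h]; ring
  have hg10 : ∀ (p b : Fin N), b ≠ p →
      QGEMAux.g φ p b 1 0 0 - QGEMAux.g φ p b 1 0 1 = Φ p b := by
    intro p b hbp
    rcases lt_trichotomy p b with h | h | h
    · simp only [QGEMAux.g, if_pos h, if_neg (asymm h), add_zero]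
      rw [hΦ p b h]; ring
    · exact absurd h.symm hbp
    · simp only [QGEMAux.g, if_pos h, if_neg (asymm h), zero_add]
      rw [hΦsym p b, hΦ b p h]; ring
  have hdiag : ∀ (p : Fin N) (x : Fin 2),
      ∏ i : {i : Fin N // i ≠ p},
        Real.cos (t * (QGEMAux.g φ p i x x 0 - QGEMAux.g φ p i x x 1) / 2) ^ 2 = 1 := by
    intro p x
    apply Finset.prod_eq_one
    intro i _
    simp [hgxx]
  have hoff : ∀ (p : Fin N) (x y : Fin 2),
      (∀ b : Fin N, b ≠ p → QGEMAux.g φ p b x y 0 - QGEMAux.g φ p b x y 1 = Φ p b ∨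
        QGEMAux.g φ p b x y 0 - QGEMAux.g φ p b x y 1 = -Φ p b) →
      ∏ i : {i : Fin N // i ≠ p},
        Real.cos (t * (QGEMAux.g φ p i x y 0 - QGEMAux.g φ p i x y 1) / 2) ^ 2
      = ∏ b ∈ Finset.univ.erase p, Real.cos (Φ p b * t / 2) ^ 2 := by
    intro p x y hb
    rw [← Finset.prod_subtype (Finset.univ.erase p) (by simp)
      (fun b : Fin N => Real.cos (t * (QGEMAux.g φ p b x y 0 - QGEMAux.g φ p b x y 1) / 2) ^ 2)]
    refine Finset.prod_congr rfl fun b hbmem => ?_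
    have hbp : b ≠ p := (Finset.mem_erase.1 hbmem).1
    rcases hb b hbp with h | h
    · rw [h, show t * Φ p b / 2 = Φ p b * t / 2 by ring]
    · rw [h, show t * -Φ p b / 2 = -(Φ p b * t / 2) by ring, Real.cos_neg]
  have hSp : ∀ p : Fin N,
      (∑ x : Fin 2, ∑ y : Fin 2, ‖ρ p x y‖ ^ 2)
        = 1 / 2 + (1 / 2) * ∏ b ∈ Finset.univ.erase p, Real.cos (Φ p b * t / 2) ^ 2 := by
    intro p
    rw [Fin.sum_univ_two, Fin.sum_univ_two, Fin.sum_univ_two]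
    rw [habs p 0 0, habs p 0 1, habs p 1 0, habs p 1 1]
    rw [hdiag p 0, hdiag p 1,
      hoff p 0 1 (fun b hbp => Or.inr (hg01 p b hbp)),
      hoff p 1 0 (fun b hbp => Or.inl (hg10 p b hbp))]
    ring
  simp_rw [hSp]
  have hNne : (N : ℝ) ≠ 0 := by
    have : (0 : ℝ) < N := by exact_mod_cast Nat.lt_of_lt_of_le Nat.zero_lt_two hN
    exact ne_of_gt this
  have hsum : ∑ p : Fin N,
      (2 * (1 - (1 / 2 + (1 / 2) * ∏ b ∈ Finset.univ.erase p, Real.cos (Φ p b * t / 2) ^ 2)))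
      = (N : ℝ) - ∑ p : Fin N, ∏ b ∈ Finset.univ.erase p, Real.cos (Φ p b * t / 2) ^ 2 := by
    rw [Finset.sum_congr rfl (fun p _ => by ring :
      ∀ p ∈ Finset.univ, (2 * (1 - (1 / 2 + (1 / 2) *
        ∏ b ∈ Finset.univ.erase p, Real.cos (Φ p b * t / 2) ^ 2)))
        = 1 - ∏ b ∈ Finset.univ.erase p, Real.cos (Φ p b * t / 2) ^ 2)]
    rw [Finset.sum_sub_distrib, Finset.sum_const, Finset.card_univ, Fintype.card_fin]
    simp
  rw [hsum, mul_sub, one_div, inv_mul_cancel₀ hNne, ← one_div]
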